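/- arXiv:1308.4698 — 6 statements merged into one kernel-verified Lean document; each statement's English description precedes it below -/
import Mathlib

section
/- Let A be an abelian category in which filtered colimits exist and are exact. An object A of 𝒜 is of finite type (every filtered increasing family of subobjects whose union is A is eventually stationary) if and only if for every functor F : 𝒯 → 𝒜 from a small filtered category, the canonical map colim_𝒯 Hom(A, F(-)) → Hom(A, colim_𝒯 F) is injective. -/
open CategoryTheory CategoryTheory.Limits
universe v u

/-- An object `A` is of *finite type* if every filtered (directed) increasing family of
subobjects of `A` whose supremum is `A` (i.e. whose only upper bound is `⊤`) is eventually
equal to `⊤`. -/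
def IsFiniteType {𝒜 : Type u} [Category.{v} 𝒜] (A : 𝒜) : Prop :=
  ∀ (ι : Type v) [Preorder ι] [IsDirected ι (· ≤ ·)] [Nonempty ι]
    (f : ι → Subobject A), Monotone f →
      (∀ g : Subobject A, (∀ i, f i ≤ g) → g = ⊤) → ∃ i, f i = ⊤

section Aux

variable {𝒜 : Type u} [Category.{v} 𝒜] [Abelian 𝒜] [HasColimits 𝒜] [AB5 𝒜]

/-- Any upper bound of the kernels of `h ≫ F.map w`, for `h` dying in the colimit, is `⊤`. -/
lemma upper_bound_eq_top {A : 𝒜} {ι : Type v} [SmallCategory ι] [IsFiltered ι]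
    (F : ι ⥤ 𝒜) (l : ι) (h : A ⟶ F.obj l) (hh : h ≫ colimit.ι F l = 0)
    (g : Subobject A)
    (hg : ∀ (m : ι) (w : l ⟶ m), kernelSubobject (h ≫ F.map w) ≤ g) : g = ⊤ := by
  let J := Under l
  let η : (Functor.const J).obj A ⟶ Under.forget l ⋙ F :=
    { app := fun w => h ≫ F.map w.hom
      naturality := fun w w' u => by
        dsimp
        rw [Category.id_comp, Category.assoc, ← F.map_comp, Under.w u] }
  have hcond : ∀ w : J, (kernel.ι η).app w ≫ (h ≫ F.map w.hom) = 0 := by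
    intro w
    have h2 := congr_app (kernel.condition η) w
    rw [NatTrans.comp_app, zero_app] at h2
    exact h2
  have hfac : ∀ w : J, ∃ c : (kernel η).obj w ⟶ (g : 𝒜),
      c ≫ g.arrow = (kernel.ι η).app w := by
    intro w
    have h1 := kernelSubobject_factors (h ≫ F.map w.hom) ((kernel.ι η).app w) (hcond w)
    refine ⟨Subobject.factorThru _ _ h1 ≫ Subobject.ofLE _ _ (hg w.right w.hom), ?_⟩
    rw [Category.assoc, Subobject.ofLE_arrow, Subobject.factorThru_arrow]
  choose c hc using hfac
  let cc : Cocone (kernel η) :=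
    { pt := (g : 𝒜)
      ι :=
        { app := c
          naturality := fun w w' u => by
            rw [← cancel_mono g.arrow]
            have hn := (kernel.ι η).naturality u
            dsimp at hn ⊢
            simp only [Category.comp_id, Category.assoc, hc] at hn ⊢
            all_goals exact hn } }
  let χ : colimit (kernel η) ⟶ (g : 𝒜) := colimit.desc _ cc
  let dd : Cocone ((Functor.const J).obj A) :=
    { pt := A
      ι := { app := fun _ => 𝟙 A, naturality := fun _ _ _ => by simp } }
  let d : colimit ((Functor.const J).obj A) ⟶ A := colimit.desc _ dd
  have hη0 : colim.map η = 0 := by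
    apply colimit.hom_ext
    intro w
    rw [colimit.ι_map, comp_zero]
    rw [← cancel_mono (colimit.pre F (Under.forget l))]
    rw [Category.assoc, colimit.ι_pre, zero_comp]
    show (h ≫ F.map w.hom) ≫ colimit.ι F w.right = 0
    have hw : F.map w.hom ≫ colimit.ι F w.right = colimit.ι F l := by
      simp
    clear hg
    rw [Category.assoc, hw, hh]
  haveI hke : IsSplitEpi (kernel.ι (colim.map η)) :=
    IsSplitEpi.mk'
      ⟨kernel.lift _ (𝟙 _) (by rw [Category.id_comp, hη0]), kernel.lift_ι _ _ _⟩
  haveI hde : IsSplitEpi d :=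
    IsSplitEpi.mk' ⟨colimit.ι ((Functor.const J).obj A) (Under.mk (𝟙 l)),
      by exact colimit.ι_desc dd (Under.mk (𝟙 l))⟩
  have hepi : Epi (colim.map (kernel.ι η) ≫ d) := by
    rw [← kernelComparison_comp_ι η colim]
    infer_instance
  have hfact : χ ≫ g.arrow = colim.map (kernel.ι η) ≫ d := by
    apply colimit.hom_ext
    intro w
    show colimit.ι _ w ≫ colimit.desc _ cc ≫ g.arrow =
      colimit.ι _ w ≫ colim.map (kernel.ι η) ≫ colimit.desc _ dd
    rw [colimit.ι_desc_assoc, ← Category.assoc, colimit.ι_map, Category.assoc,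
      colimit.ι_desc]
    show cc.ι.app w ≫ g.arrow = (kernel.ι η).app w ≫ 𝟙 A
    exact (hc w).trans (Category.comp_id _).symm |>.trans rfl |>.symm |>.symm
  rw [← hfact] at hepi
  haveI := hepi
  haveI : Epi g.arrow := epi_of_epi χ g.arrow
  haveI : IsIso g.arrow := isIso_of_mono_of_epi _
  exact Subobject.eq_top_of_isIso_arrow g

/-- If `h : A ⟶ F.obj l` dies in the colimit, it dies at some finite stage. -/
lemma exists_map_eq_zero {A : 𝒜} (hA : IsFiniteType A) {ι : Type v} [SmallCategory ι]
    [IsFiltered ι] (F : ι ⥤ 𝒜) (l : ι) (h : A ⟶ F.obj l)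
    (hh : h ≫ colimit.ι F l = 0) :
    ∃ (m : ι) (w : l ⟶ m), h ≫ F.map w = 0 := by
  let T := Σ m : ι, (l ⟶ m)
  let p : T → Subobject A := fun t => kernelSubobject (h ≫ F.map t.2)
  letI : Preorder T := Preorder.lift p
  have hle : ∀ (t : T) {m : ι} (x : t.1 ⟶ m), t ≤ ⟨m, t.2 ≫ x⟩ := by
    intro t m x
    show p t ≤ p ⟨m, t.2 ≫ x⟩
    show kernelSubobject (h ≫ F.map t.2) ≤ kernelSubobject (h ≫ F.map (t.2 ≫ x))
    rw [F.map_comp, ← Category.assoc]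
    exact kernelSubobject_comp_le _ _
  haveI : IsDirected T (· ≤ ·) := by
    refine ⟨fun a b => ?_⟩
    set w₁ : l ⟶ IsFiltered.max a.1 b.1 := a.2 ≫ IsFiltered.leftToMax a.1 b.1 with hw₁
    set w₂ : l ⟶ IsFiltered.max a.1 b.1 := b.2 ≫ IsFiltered.rightToMax a.1 b.1 with hw₂
    refine ⟨⟨IsFiltered.coeq w₁ w₂, w₁ ≫ IsFiltered.coeqHom w₁ w₂⟩, ?_, ?_⟩
    · show kernelSubobject (h ≫ F.map a.2) ≤
        kernelSubobject (h ≫ F.map (w₁ ≫ IsFiltered.coeqHom w₁ w₂))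
      conv_rhs => rw [hw₁, Category.assoc, F.map_comp, ← Category.assoc]
      exact kernelSubobject_comp_le _ _
    · show kernelSubobject (h ≫ F.map b.2) ≤
        kernelSubobject (h ≫ F.map (w₁ ≫ IsFiltered.coeqHom w₁ w₂))
      conv_rhs => rw [IsFiltered.coeq_condition w₁ w₂, hw₂, Category.assoc, F.map_comp,
        ← Category.assoc]
      exact kernelSubobject_comp_le _ _
  haveI : Nonempty T := ⟨⟨l, 𝟙 l⟩⟩
  have hmono : Monotone p := fun _ _ hx => hx
  obtain ⟨t, ht⟩ := hA T p hmono (fun g hg =>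
    upper_bound_eq_top F l h hh g (fun m w => hg ⟨m, w⟩))
  refine ⟨t.1, t.2, ?_⟩
  have h1 := kernelSubobject_arrow_comp (h ≫ F.map t.2)
  rw [show kernelSubobject (h ≫ F.map t.2) = ⊤ from ht] at h1
  exact zero_of_epi_comp _ h1

end Aux

theorem finiteType_iff_hom_colimit_injective
    {𝒜 : Type u} [Category.{v} 𝒜] [Abelian 𝒜] [HasColimits 𝒜] [AB5 𝒜] (A : 𝒜) :
    IsFiniteType A ↔
      ∀ (ι : Type v) [SmallCategory ι] [IsFiltered ι] (F : ι ⥤ 𝒜)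
        (j k : ι) (f : A ⟶ F.obj j) (g : A ⟶ F.obj k),
          f ≫ colimit.ι F j = g ≫ colimit.ι F k →
            ∃ (l : ι) (u : j ⟶ l) (v : k ⟶ l), f ≫ F.map u = g ≫ F.map v := by
  constructor
  · intro hA ι _ _ F j k f g hfg
    have hh : (f ≫ F.map (IsFiltered.leftToMax j k) - g ≫ F.map (IsFiltered.rightToMax j k)) ≫
        colimit.ι F (IsFiltered.max j k) = 0 := by
      rw [Preadditive.sub_comp, Category.assoc, Category.assoc, colimit.w, colimit.w, hfg,
        sub_self]
    obtain ⟨m, w, hw⟩ := exists_map_eq_zero hA F _ _ hh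
    refine ⟨m, IsFiltered.leftToMax j k ≫ w, IsFiltered.rightToMax j k ≫ w, ?_⟩
    rw [Preadditive.sub_comp, Category.assoc, Category.assoc, ← F.map_comp, ← F.map_comp] at hw
    exact sub_eq_zero.mp hw
  · intro H ι _ _ _ f hmono hub
    let G : ι ⥤ 𝒜 :=
      { obj := fun i => cokernel (f i).arrow
        map := fun {i j} u => cokernel.map _ _ (Subobject.ofLE _ _ (hmono (leOfHom u))) (𝟙 A)
          (by rw [Category.comp_id, Subobject.ofLE_arrow])
        map_id := fun i => by
          apply coequalizer.hom_ext
          simp [cokernel.map]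
        map_comp := fun u v => by
          apply coequalizer.hom_ext
          simp [cokernel.map] }
    have hπι : ∀ {i j : ι} (u : i ⟶ j),
        cokernel.π (f i).arrow ≫ G.map u = cokernel.π (f j).arrow := by
      intro i j u
      simp [G, cokernel.map]
    obtain ⟨i₀⟩ := ‹Nonempty ι›
    have hc : cokernel.π (f i₀).arrow ≫ colimit.ι G i₀ = 0 := by
      have hker : ∀ j, f j ≤ kernelSubobject (cokernel.π (f i₀).arrow ≫ colimit.ι G i₀) := by
        intro j
        apply le_kernelSubobject
        obtain ⟨j', h1, h2⟩ := directed_of (· ≤ ·) j i₀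
        have e1 : cokernel.π (f i₀).arrow ≫ colimit.ι G i₀ =
            cokernel.π (f j').arrow ≫ colimit.ι G j' := by
          rw [← colimit.w G (homOfLE h2), ← Category.assoc, hπι]
        rw [e1, show (f j).arrow = Subobject.ofLE _ _ (hmono h1) ≫ (f j').arrow from
          (Subobject.ofLE_arrow _).symm, Category.assoc, ← Category.assoc ((f j').arrow),
          cokernel.condition, zero_comp, comp_zero]
      have htop := hub _ hker
      have h1 := kernelSubobject_arrow_comp (cokernel.π (f i₀).arrow ≫ colimit.ι G i₀)
      rw [htop] at h1
      exact zero_of_epi_comp _ h1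
    obtain ⟨l, u, v, huv⟩ := H ι G i₀ i₀ (cokernel.π (f i₀).arrow) 0 (by rw [hc, zero_comp])
    have hπ0 : cokernel.π (f l).arrow = 0 := by rw [← hπι u, huv, zero_comp]
    haveI : Epi (f l).arrow := Abelian.epi_of_cokernel_π_eq_zero _ hπ0
    haveI : IsIso (f l).arrow := isIso_of_mono_of_epi _
    exact ⟨l, Subobject.eq_top_of_isIso_arrow (f l)⟩
end

section
/- In an abelian category with exact filtered colimits, the class of objects of finite type is stable under quotients and extensions: if 0 → A → B → C → 0 is a short exact sequence, then (i) any quotient of a finite type object is of finite type, and (ii) if A and C are of finite type then B is of finite type. -/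
open CategoryTheory CategoryTheory.Limits
universe v u

open CategoryTheory CategoryTheory.Limits
open CategoryTheory.Abelian.Pseudoelement
open scoped Pseudoelement

namespace FTAux

open CategoryTheory.Abelian (Pseudoelement)

variable {C : Type u} [Category.{v} C] [Abelian C]

/-- Pseudoelement membership in a subobject. -/
def PMem {B : C} (s : Subobject B) (b : Pseudoelement B) : Prop :=
  ∃ a : Pseudoelement (s : C), pseudoApply s.arrow a = b

theorem pmem_of_le {B : C} {s t : Subobject B} (h : s ≤ t) {b : Pseudoelement B} :
    PMem s b → PMem t b := by
  rintro ⟨a, rfl⟩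
  exact ⟨pseudoApply (Subobject.ofLE s t h) a, by
    rw [← Pseudoelement.comp_apply, Subobject.ofLE_arrow]⟩

theorem le_of_pmem {B : C} (s t : Subobject B)
    (H : ∀ b : Pseudoelement B, PMem s b → PMem t b) : s ≤ t := by
  have hsurj : Function.Surjective
      (pseudoApply (pullback.snd t.arrow s.arrow)) := by
    intro a
    obtain ⟨c, hc⟩ := H (pseudoApply s.arrow a) ⟨a, rfl⟩
    obtain ⟨d, _, hd2⟩ := pseudo_pullback (p := c) (q := a) hc
    exact ⟨d, hd2⟩
  haveI : Epi (pullback.snd t.arrow s.arrow) := epi_of_pseudo_surjective _ hsurj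
  haveI : IsIso (pullback.snd t.arrow s.arrow) := isIso_of_mono_of_epi _
  refine Subobject.le_of_comm
    (inv (pullback.snd t.arrow s.arrow) ≫ pullback.fst t.arrow s.arrow) ?_
  rw [Category.assoc, pullback.condition, IsIso.inv_comp_eq]

theorem eq_top_of_pmem {B : C} (s : Subobject B) (H : ∀ b : Pseudoelement B, PMem s b) :
    s = ⊤ :=
  le_antisymm le_top (le_of_pmem ⊤ s fun b _ => H b)

theorem pseudo_id_apply {B : C} (b : Pseudoelement B) : pseudoApply (𝟙 B) b = b :=
  Quotient.inductionOn b fun a => by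
    rw [pseudoApply_mk']
    exact Quotient.sound ⟨_, 𝟙 _, 𝟙 _, inferInstance, inferInstance, by simp⟩

theorem pmem_top {B : C} (b : Pseudoelement B) : PMem (⊤ : Subobject B) b :=
  ⟨pseudoApply (inv (⊤ : Subobject B).arrow) b, by
    rw [← Pseudoelement.comp_apply, IsIso.inv_hom_id, pseudo_id_apply]⟩

theorem cokernel_zero_of_pmem {B : C} {s : Subobject B} {b : Pseudoelement B} (h : PMem s b) :
    pseudoApply (cokernel.π s.arrow) b = 0 := by
  obtain ⟨a, rfl⟩ := h
  rw [← Pseudoelement.comp_apply, cokernel.condition]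
  exact zero_apply _ _

theorem pmem_of_cokernel_zero {B : C} {s : Subobject B} {b : Pseudoelement B}
    (h : pseudoApply (cokernel.π s.arrow) b = 0) : PMem s b :=
  pseudo_exact_of_exact (ShortComplex.exact_cokernel s.arrow) b h

/-- The preimage of a subobject along a morphism. -/
noncomputable def preSub {A B : C} (q : A ⟶ B) (t : Subobject B) : Subobject A :=
  Subobject.mk (pullback.snd t.arrow q)

theorem pmem_preSub {A B : C} (q : A ⟶ B) (t : Subobject B) {a : Pseudoelement A}
    {c : Pseudoelement (t : C)}
    (h : pseudoApply t.arrow c = pseudoApply q a) : PMem (preSub q t) a := by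
  obtain ⟨d, _, hd2⟩ := pseudo_pullback (p := c) (q := a) h
  refine ⟨pseudoApply (Subobject.underlyingIso (pullback.snd t.arrow q)).inv d, ?_⟩
  unfold preSub
  rw [← Pseudoelement.comp_apply, Subobject.underlyingIso_arrow, hd2]

theorem apply_pmem_of_pmem_preSub {A B : C} (q : A ⟶ B) (t : Subobject B)
    {a : Pseudoelement A} (h : PMem (preSub q t) a) : PMem t (pseudoApply q a) := by
  obtain ⟨e, rfl⟩ := h
  refine ⟨pseudoApply ((Subobject.underlyingIso (pullback.snd t.arrow q)).hom ≫
    pullback.fst t.arrow q) e, ?_⟩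
  unfold preSub
  erw [← Pseudoelement.comp_apply, ← Pseudoelement.comp_apply, Category.assoc,
    pullback.condition, ← Category.assoc, Subobject.underlyingIso_hom_comp_eq_mk]

theorem preSub_mono {A B : C} (q : A ⟶ B) {s t : Subobject B} (h : s ≤ t) :
    preSub q s ≤ preSub q t := by
  refine le_of_pmem _ _ fun a ha => ?_
  obtain ⟨c, hc⟩ := pmem_of_le h (apply_pmem_of_pmem_preSub q s ha)
  exact pmem_preSub q t hc

theorem top_of_preSub_top {A B : C} (q : A ⟶ B) [Epi q] {t : Subobject B}
    (h : preSub q t = ⊤) : t = ⊤ := by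
  refine eq_top_of_pmem _ fun b => ?_
  obtain ⟨a, rfl⟩ := pseudo_surjective_of_epi q b
  exact apply_pmem_of_pmem_preSub q t (h ▸ pmem_top a)

/-- The image of a subobject along a morphism. -/
noncomputable def imSub {A B : C} (q : A ⟶ B) (s : Subobject A) : Subobject B :=
  Subobject.mk (image.ι (s.arrow ≫ q))

theorem pmem_imSub {A B : C} (q : A ⟶ B) (s : Subobject A) (e : Pseudoelement (s : C)) :
    PMem (imSub q s) (pseudoApply q (pseudoApply s.arrow e)) := by
  refine ⟨pseudoApply ((Subobject.underlyingIso (image.ι (s.arrow ≫ q))).inv)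
    (pseudoApply (factorThruImage (s.arrow ≫ q)) e), ?_⟩
  unfold imSub
  rw [← Pseudoelement.comp_apply, Subobject.underlyingIso_arrow,
    ← Pseudoelement.comp_apply, image.fac, Pseudoelement.comp_apply]

theorem exists_of_pmem_imSub {A B : C} (q : A ⟶ B) (s : Subobject A) {b : Pseudoelement B}
    (h : PMem (imSub q s) b) :
    ∃ e : Pseudoelement (s : C), pseudoApply q (pseudoApply s.arrow e) = b := by
  obtain ⟨v, rfl⟩ := h
  obtain ⟨e, he⟩ := pseudo_surjective_of_epi (factorThruImage (s.arrow ≫ q))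
    (pseudoApply (Subobject.underlyingIso (image.ι (s.arrow ≫ q))).hom v)
  refine ⟨e, ?_⟩
  erw [← Pseudoelement.comp_apply, ← image.fac (s.arrow ≫ q), Pseudoelement.comp_apply, he,
    ← Pseudoelement.comp_apply]
  unfold imSub
  rw [Subobject.underlyingIso_hom_comp_eq_mk]

theorem imSub_mono {A B : C} (q : A ⟶ B) {s t : Subobject A} (h : s ≤ t) :
    imSub q s ≤ imSub q t := by
  refine le_of_pmem _ _ fun b hb => ?_
  obtain ⟨e, he⟩ := exists_of_pmem_imSub q s hb
  obtain ⟨c, hc⟩ := pmem_of_le h (⟨e, rfl⟩ : PMem s (pseudoApply s.arrow e))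
  have := pmem_imSub q t c
  rwa [hc, he] at this

/-- A subobject containing the kernel of `q` and mapping onto the image of `q`
is the whole object. -/
theorem eq_top_of_ker_le_of_surj {B D : C} (q : B ⟶ D) (s : Subobject B)
    (hker : ∀ b : Pseudoelement B, pseudoApply q b = 0 → PMem s b)
    (hsur : ∀ b : Pseudoelement B,
      ∃ e : Pseudoelement (s : C), pseudoApply q (pseudoApply s.arrow e) = pseudoApply q b) :
    s = ⊤ := by
  refine eq_top_of_pmem _ fun b => ?_
  obtain ⟨e, he⟩ := hsur b
  obtain ⟨k, hk0, hk⟩ := sub_of_eq_image q b (pseudoApply s.arrow e) he.symm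
  have hπ := hk _ (cokernel.π s.arrow) (cokernel_zero_of_pmem ⟨e, rfl⟩)
  rw [cokernel_zero_of_pmem (hker k hk0)] at hπ
  exact pmem_of_cokernel_zero hπ.symm

/-- The join of two subobjects, realized as the image of the map from the biproduct. -/
noncomputable def supSub {B : C} (x y : Subobject B) : Subobject B :=
  Subobject.mk (image.ι (biprod.desc x.arrow y.arrow))

theorem left_le_supSub {B : C} (x y : Subobject B) : x ≤ supSub x y := by
  unfold supSub
  exact Subobject.le_mk_of_comm (biprod.inl ≫ factorThruImage (biprod.desc x.arrow y.arrow))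
    (by rw [Category.assoc, image.fac, biprod.inl_desc])

theorem right_le_supSub {B : C} (x y : Subobject B) : y ≤ supSub x y := by
  unfold supSub
  exact Subobject.le_mk_of_comm (biprod.inr ≫ factorThruImage (biprod.desc x.arrow y.arrow))
    (by rw [Category.assoc, image.fac, biprod.inr_desc])

theorem exists_of_pmem_supSub {B : C} (x y : Subobject B) {b : Pseudoelement B}
    (h : PMem (supSub x y) b) :
    ∃ d : Pseudoelement ((x : C) ⊞ (y : C)),
      pseudoApply (biprod.desc x.arrow y.arrow) d = b := by
  obtain ⟨v, rfl⟩ := h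
  obtain ⟨d, hd⟩ := pseudo_surjective_of_epi (factorThruImage (biprod.desc x.arrow y.arrow))
    (pseudoApply (Subobject.underlyingIso (image.ι (biprod.desc x.arrow y.arrow))).hom v)
  refine ⟨d, ?_⟩
  erw [← image.fac (biprod.desc x.arrow y.arrow), Pseudoelement.comp_apply, hd,
    ← Pseudoelement.comp_apply]
  unfold supSub
  rw [Subobject.underlyingIso_hom_comp_eq_mk]

end FTAux

open CategoryTheory.Abelian (Pseudoelement)

/-- stability of finite type objects under quotients and extensions. -/
theorem isFiniteType_quotient_and_extension
    {𝒜 : Type u} [Category.{v} 𝒜] [Abelian 𝒜] [HasColimits 𝒜] [AB5 𝒜] :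
    (∀ (A B : 𝒜) (p : A ⟶ B), Epi p → IsFiniteType A → IsFiniteType B) ∧
    (∀ (S : ShortComplex 𝒜), S.ShortExact →
      IsFiniteType S.X₁ → IsFiniteType S.X₃ → IsFiniteType S.X₂) := by
  constructor
  · -- quotients
    intro A B p hp hA
    haveI := hp
    intro ι _ _ _ f hf hub
    obtain ⟨i0⟩ : Nonempty ι := inferInstance
    have hmono : Monotone (fun i => FTAux.preSub p (f i)) :=
      fun i j hij => FTAux.preSub_mono p (hf hij)
    have hcond : ∀ g : Subobject A, (∀ i, FTAux.preSub p (f i) ≤ g) → g = ⊤ := by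
      intro h hh
      have him : ∀ i, f i ≤ FTAux.imSub p h := by
        intro i
        refine FTAux.le_of_pmem _ _ fun b hb => ?_
        obtain ⟨bi, rfl⟩ := hb
        obtain ⟨d, hd⟩ := pseudo_surjective_of_epi (pullback.fst (f i).arrow p) bi
        have hmem : FTAux.PMem (FTAux.preSub p (f i))
            (pseudoApply (pullback.snd (f i).arrow p) d) := by
          refine FTAux.pmem_preSub p (f i) (c := pseudoApply (pullback.fst (f i).arrow p) d) ?_
          rw [← Pseudoelement.comp_apply, ← Pseudoelement.comp_apply, pullback.condition]
        obtain ⟨e, he⟩ := FTAux.pmem_of_le (hh i) hmem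
        have hth := FTAux.pmem_imSub p h e
        rwa [he, ← Pseudoelement.comp_apply, ← pullback.condition,
          Pseudoelement.comp_apply, hd] at hth
      have htop : FTAux.imSub p h = ⊤ := hub _ him
      refine FTAux.eq_top_of_ker_le_of_surj p h ?_ ?_
      · intro a ha
        refine FTAux.pmem_of_le (hh i0) (FTAux.pmem_preSub p (f i0) (c := 0) ?_)
        rw [apply_zero, ha]
      · intro a
        exact FTAux.exists_of_pmem_imSub p h (htop ▸ FTAux.pmem_top (pseudoApply p a))
    obtain ⟨i, hi⟩ := hA ι (fun i => FTAux.preSub p (f i)) hmono hcond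
    exact ⟨i, FTAux.top_of_preSub_top p hi⟩
  · -- extensions
    intro S hS hA hC
    haveI := hS.mono_f
    haveI := hS.epi_g
    intro ι _ _ _ f hf hub2
    -- Step A: push the family to X₃ and find `i0` whose image is everything.
    have hGmono : Monotone (fun i => FTAux.imSub S.g (f i)) :=
      fun i j hij => FTAux.imSub_mono _ (hf hij)
    have hGcond : ∀ t : Subobject S.X₃, (∀ i, FTAux.imSub S.g (f i) ≤ t) → t = ⊤ := by
      intro t ht
      have hle : ∀ i, f i ≤ FTAux.preSub S.g t := by
        intro i
        refine FTAux.le_of_pmem _ _ fun b hb => ?_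
        obtain ⟨e, rfl⟩ := hb
        obtain ⟨c, hc⟩ := FTAux.pmem_of_le (ht i) (FTAux.pmem_imSub S.g (f i) e)
        exact FTAux.pmem_preSub S.g t hc
      exact FTAux.top_of_preSub_top S.g (hub2 _ hle)
    obtain ⟨i0, hi0⟩ := hC ι (fun i => FTAux.imSub S.g (f i)) hGmono hGcond
    -- Step B: pull the family back to X₁.
    have hHmono : Monotone (fun i => FTAux.preSub S.f (f i)) :=
      fun i j hij => FTAux.preSub_mono _ (hf hij)
    have hHcond : ∀ h : Subobject S.X₁, (∀ i, FTAux.preSub S.f (f i) ≤ h) → h = ⊤ := by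
      intro h hh
      have hft : ∀ i, f i ≤ FTAux.supSub (FTAux.imSub S.f h) (f i0) := by
        intro i
        obtain ⟨j, hij, hi0j⟩ := directed_of (· ≤ ·) i i0
        refine le_trans (hf hij) (FTAux.le_of_pmem _ _ fun b hb => ?_)
        obtain ⟨e, he⟩ := FTAux.exists_of_pmem_imSub S.g (f i0)
          (hi0 ▸ FTAux.pmem_top (pseudoApply S.g b))
        obtain ⟨k, hk0, hk⟩ := sub_of_eq_image S.g b (pseudoApply (f i0).arrow e) he.symm
        obtain ⟨a, ha⟩ := pseudo_exact_of_exact hS.exact k hk0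
        have hkj : FTAux.PMem (f j) k := by
          apply FTAux.pmem_of_cokernel_zero
          have h1 : pseudoApply (cokernel.π (f j).arrow) (pseudoApply (f i0).arrow e) = 0 :=
            FTAux.cokernel_zero_of_pmem (FTAux.pmem_of_le (hf hi0j) ⟨e, rfl⟩)
          have h2 := hk _ (cokernel.π (f j).arrow) h1
          rw [h2, FTAux.cokernel_zero_of_pmem hb]
        obtain ⟨c, hc⟩ := hkj
        have hah : FTAux.PMem h a :=
          FTAux.pmem_of_le (hh j)
            (FTAux.pmem_preSub S.f (f j) (c := c) (by rw [hc, ha]))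
        obtain ⟨e', he'⟩ := hah
        have hkim : FTAux.PMem (FTAux.imSub S.f h) k := by
          have hth := FTAux.pmem_imSub S.f h e'
          rwa [he', ha] at hth
        apply FTAux.pmem_of_cokernel_zero
        have hπ0 : pseudoApply (cokernel.π (FTAux.supSub (FTAux.imSub S.f h) (f i0)).arrow)
            (pseudoApply (f i0).arrow e) = 0 :=
          FTAux.cokernel_zero_of_pmem
            (FTAux.pmem_of_le (FTAux.right_le_supSub _ _) ⟨e, rfl⟩)
        have h3 := hk _ (cokernel.π (FTAux.supSub (FTAux.imSub S.f h) (f i0)).arrow) hπ0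
        rw [FTAux.cokernel_zero_of_pmem
          (FTAux.pmem_of_le (FTAux.left_le_supSub _ _) hkim)] at h3
        exact h3.symm
      have httop := hub2 _ hft
      -- Now deduce `h = ⊤`.
      refine FTAux.eq_top_of_pmem _ fun a => ?_
      obtain ⟨d, hd⟩ := FTAux.exists_of_pmem_supSub (FTAux.imSub S.f h) (f i0)
        (httop ▸ FTAux.pmem_top (pseudoApply S.f a))
      have hga : pseudoApply S.g (pseudoApply S.f a) = 0 := by
        rw [← Pseudoelement.comp_apply, S.zero]; exact zero_apply _ _
      have hm1 : (FTAux.imSub S.f h).arrow ≫ S.g = 0 := by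
        have hι : image.ι (h.arrow ≫ S.f) ≫ S.g = 0 := by
          rw [← cancel_epi (factorThruImage (h.arrow ≫ S.f)), ← Category.assoc, image.fac,
            Category.assoc, S.zero, comp_zero, comp_zero]
        unfold FTAux.imSub
        rw [← Subobject.underlyingIso_hom_comp_eq_mk, Category.assoc, hι, comp_zero]
      have hdesc : biprod.desc (FTAux.imSub S.f h).arrow (f i0).arrow ≫ S.g =
          biprod.snd ≫ ((f i0).arrow ≫ S.g) := by
        apply biprod.hom_ext' <;> simp [hm1]
      have h2 : pseudoApply S.g (pseudoApply (f i0).arrow (pseudoApply biprod.snd d)) = 0 := by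
        rw [← Pseudoelement.comp_apply, ← Pseudoelement.comp_apply, ← hdesc,
          Pseudoelement.comp_apply, hd, hga]
      obtain ⟨a₂, ha₂⟩ := pseudo_exact_of_exact hS.exact _ h2
      have hmem2 : FTAux.PMem h a₂ :=
        FTAux.pmem_of_le (hh i0)
          (FTAux.pmem_preSub S.f (f i0) (c := pseudoApply biprod.snd d) ha₂.symm)
      obtain ⟨e₂, he₂⟩ := hmem2
      have hβ₂ : FTAux.PMem (FTAux.imSub S.f h)
          (pseudoApply (f i0).arrow (pseudoApply biprod.snd d)) := by
        have hth := FTAux.pmem_imSub S.f h e₂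
        rwa [he₂, ha₂] at hth
      have hπd : pseudoApply (cokernel.π (FTAux.imSub S.f h).arrow) (pseudoApply S.f a) = 0 := by
        rw [← hd, ← Pseudoelement.comp_apply]
        have hdesc2 : biprod.desc (FTAux.imSub S.f h).arrow (f i0).arrow ≫
            cokernel.π (FTAux.imSub S.f h).arrow =
            biprod.snd ≫ ((f i0).arrow ≫ cokernel.π (FTAux.imSub S.f h).arrow) := by
          apply biprod.hom_ext' <;> simp
        rw [hdesc2, Pseudoelement.comp_apply, Pseudoelement.comp_apply]
        exact FTAux.cokernel_zero_of_pmem hβ₂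
      obtain ⟨e₃, he₃⟩ := FTAux.exists_of_pmem_imSub S.f h (FTAux.pmem_of_cokernel_zero hπd)
      exact ⟨e₃, pseudo_injective_of_mono S.f he₃⟩
    obtain ⟨i1, hi1⟩ := hA ι (fun i => FTAux.preSub S.f (f i)) hHmono hHcond
    obtain ⟨j, h0j, h1j⟩ := directed_of (· ≤ ·) i0 i1
    refine ⟨j, FTAux.eq_top_of_pmem _ fun b => ?_⟩
    obtain ⟨e, he⟩ := FTAux.exists_of_pmem_imSub S.g (f i0)
      (hi0 ▸ FTAux.pmem_top (pseudoApply S.g b))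
    obtain ⟨k, hk0, hk⟩ := sub_of_eq_image S.g b _ he.symm
    obtain ⟨a, ha⟩ := pseudo_exact_of_exact hS.exact k hk0
    have hk1 : FTAux.PMem (f i1) k := by
      have hth := FTAux.apply_pmem_of_pmem_preSub S.f (f i1) (hi1 ▸ FTAux.pmem_top a)
      rwa [ha] at hth
    have h1 := hk _ (cokernel.π (f j).arrow)
      (FTAux.cokernel_zero_of_pmem (FTAux.pmem_of_le (hf h0j) ⟨e, rfl⟩))
    rw [FTAux.cokernel_zero_of_pmem (FTAux.pmem_of_le (hf h1j) hk1)] at h1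
    exact FTAux.pmem_of_cokernel_zero h1.symm
end

section
/- Let 𝒞 be a small category, 𝒜 an abelian category with exact filtered colimits, and F : 𝒞 → 𝒜 a functor. Then: (a) if F is of finite type, F has a finite support; (b) if F has a finite support and F(c) is of finite type in the category of End_𝒞(c)-objects of 𝒜 for every object c, then F is of finite type; (c) the class of functors with finite support is stable under quotients and extensions. -/
set_option maxHeartbeats 1600000

open CategoryTheory CategoryTheory.Limits
universe v u

/-- A set `S` of objects is a *support* of `F` if every subfunctor of `F` agreeing with `F`
on all objects of `S` is all of `F`. -/
def IsSupport {𝒜 : Type u} [Category.{v} 𝒜] {C : Type v} [SmallCategory C]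
    (S : Set C) (F : C ⥤ 𝒜) : Prop :=
  ∀ (G : C ⥤ 𝒜) (i : G ⟶ F), Mono i → (∀ s ∈ S, IsIso (i.app s)) → IsIso i

/-- `F` has *finite support* if it admits a finite support. -/
def HasFiniteSupport {𝒜 : Type u} [Category.{v} 𝒜] {C : Type v} [SmallCategory C]
    (F : C ⥤ 𝒜) : Prop :=
  ∃ S : Set C, S.Finite ∧ IsSupport S F

/-- The value `F(c)`, as an object of the category `𝒜_{End(c)}` of `End(c)`-objects of `𝒜`,
realized as a functor `SingleObj (End c) ⥤ 𝒜`. -/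
def endFunctor {𝒜 : Type u} [Category.{v} 𝒜] {C : Type v} [SmallCategory C]
    (F : C ⥤ 𝒜) (c : C) : SingleObj (CategoryTheory.End c) ⥤ 𝒜 where
  obj _ := F.obj c
  map m := F.map m
  map_id _ := F.map_id c
  map_comp f g := F.map_comp f g

noncomputable section AuxFTS

namespace FTSAux

universe v' u' w'

section Generic

variable {𝒟 : Type u'} [Category.{v'} 𝒟] [Abelian 𝒟] [HasColimitsOfSize.{v', v'} 𝒟]

/-- Congruence for coproduct injections. -/
lemma ι_congr {𝒟' : Type u'} [Category.{v'} 𝒟'] {β : Type v'} (f : β → 𝒟')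
    [HasCoproduct f] {b b' : β} (h : b = b') (hf : f b = f b') :
    Sigma.ι f b = eqToHom hf ≫ Sigma.ι f b' := by
  subst h
  simp

/-- If the only upper bound of the family is `⊤`, the canonical map from the coproduct is epi. -/
lemma epi_desc_arrow {A : 𝒟} {ι : Type v'} (f : ι → Subobject A)
    (h : ∀ g : Subobject A, (∀ i, f i ≤ g) → g = ⊤) :
    Epi (Sigma.desc fun i => (f i).arrow) := by
  set κ : (∐ fun i => ((f i : 𝒟))) ⟶ A := Sigma.desc fun i => (f i).arrow with hκ
  have h1 : ∀ i, f i ≤ Subobject.mk (image.ι κ) := by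
    intro i
    refine Subobject.le_mk_of_comm (Sigma.ι (fun j => ((f j : 𝒟))) i ≫ factorThruImage κ) ?_
    rw [Category.assoc, image.fac, hκ]
    simp
  have h2 := h _ h1
  haveI : IsIso (image.ι κ) := (Subobject.isIso_iff_mk_eq_top _).mpr h2
  rw [← image.fac κ]
  exact epi_comp _ _

/-- Conversely, if the canonical map from the coproduct is epi, the only common upper bound
is `⊤`. -/
lemma bound_of_epi {A : 𝒟} {ι : Type v'} {X : ι → 𝒟} (m : ∀ i, X i ⟶ A) [∀ i, Mono (m i)]
    (hepi : Epi (Sigma.desc m)) :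
    ∀ g : Subobject A, (∀ i, Subobject.mk (m i) ≤ g) → g = ⊤ := by
  intro g hg
  rw [← Subobject.isIso_arrow_iff_eq_top]
  have heq : Sigma.desc m = (Sigma.desc fun i => Subobject.ofMkLE _ _ (hg i)) ≫ g.arrow := by
    ext i
    simp [Subobject.ofMkLE_arrow]
  rw [heq] at hepi
  haveI := hepi
  haveI : Epi g.arrow := epi_of_epi (Sigma.desc fun i => Subobject.ofMkLE _ _ (hg i)) g.arrow
  exact isIso_of_mono_of_epi _

end Generic

section FunctorCat

variable {𝒜 : Type u'} [Category.{v'} 𝒜] [Abelian 𝒜] [HasColimitsOfSize.{v', v'} 𝒜]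
variable {K : Type w'} [Category.{v'} K]

lemma epi_desc_iff_app {B : K ⥤ 𝒜} {ι : Type v'} {X : ι → (K ⥤ 𝒜)} (m : ∀ i, X i ⟶ B) :
    Epi (Sigma.desc m) ↔ ∀ k : K, Epi (Sigma.desc fun i => (m i).app k) := by
  constructor
  · intro h k
    haveI := h
    let E := (evaluation K 𝒜).obj k
    have hc : sigmaComparison E X ≫ E.map (Sigma.desc m) = Sigma.desc fun i => E.map (m i) :=
      sigmaComparison_map_desc E X B m
    have : Epi (sigmaComparison E X ≫ E.map (Sigma.desc m)) := by
      haveI : Epi (E.map (Sigma.desc m)) := by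
        show Epi ((Sigma.desc m).app k)
        infer_instance
      exact epi_comp _ _
    rw [hc] at this
    exact this
  · intro h
    haveI : ∀ k : K, Epi ((Sigma.desc m).app k) := by
      intro k
      let E := (evaluation K 𝒜).obj k
      have hc : sigmaComparison E X ≫ E.map (Sigma.desc m) = Sigma.desc fun i => E.map (m i) :=
        sigmaComparison_map_desc E X B m
      have h2 : (Sigma.desc m).app k =
          inv (sigmaComparison E X) ≫ Sigma.desc fun i => E.map (m i) := by
        rw [← hc, IsIso.inv_hom_id_assoc]
        rfl
      rw [h2]
      haveI : Epi (Sigma.desc fun i => E.map (m i)) := h k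
      exact epi_comp _ _
    exact NatTrans.epi_of_epi_app _

end FunctorCat

section Gen

variable {𝒜 : Type u} [Category.{v} 𝒜] [Abelian 𝒜] [HasColimits 𝒜]
variable {C : Type v} [SmallCategory C]

/-- The index type of the generating data for a finite set `S` of objects. -/
abbrev genIdx (S : Finset C) (c : C) : Type v := Σ s : {x : C // x ∈ S}, ((s : C) ⟶ c)

/-- The functor `c ↦ ⨁_{s ∈ S, φ : s → c} F(s)`. -/
def genK (F : C ⥤ 𝒜) (S : Finset C) : C ⥤ 𝒜 where
  obj c := ∐ fun p : genIdx S c => F.obj p.1.1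
  map {c d} φ := Sigma.desc fun p => Sigma.ι (fun q : genIdx S d => F.obj q.1.1) ⟨p.1, p.2 ≫ φ⟩
  map_id c := by
    apply Sigma.hom_ext
    intro p
    simp only [colimit.ι_desc, Cofan.mk_ι_app, Category.comp_id]
    exact (ι_congr (fun q : genIdx S c => F.obj q.1.1)
      (show (⟨p.1, p.2 ≫ 𝟙 c⟩ : genIdx S c) = p by rw [Category.comp_id]) rfl).trans (by simp)
  map_comp {c d e} φ ψ := by
    apply Sigma.hom_ext
    intro p
    simp only [colimit.ι_desc, Cofan.mk_ι_app, colimit.ι_desc_assoc]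
    exact (ι_congr (fun q : genIdx S e => F.obj q.1.1)
      (show (⟨p.1, p.2 ≫ (φ ≫ ψ)⟩ : genIdx S e) = ⟨p.1, (p.2 ≫ φ) ≫ ψ⟩ by
        rw [Category.assoc]) rfl).trans (by simp)

/-- The canonical natural transformation `genK F S ⟶ F`. -/
def genκ (F : C ⥤ 𝒜) (S : Finset C) : genK F S ⟶ F where
  app c := Sigma.desc fun p => F.map p.2
  naturality c d φ := by
    apply Sigma.hom_ext
    intro p
    simp [genK]

/-- The functor `SingleObj (End c) ⥤ C` collapsing everything onto `c`. -/
def toC (c : C) : SingleObj (CategoryTheory.End c) ⥤ C where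
  obj _ := c
  map m := m
  map_id _ := rfl
  map_comp _ _ := rfl

end Gen

end FTSAux

end AuxFTS

/-- (a) a finite type functor has finite support; (b) a functor with finite
support which is pointwise of finite type over the endomorphism monoids is of finite type;
(c) functors with finite support are stable under quotients and extensions. -/
theorem finiteType_support_properties
    {𝒜 : Type u} [Category.{v} 𝒜] [Abelian 𝒜] [HasColimits 𝒜] [AB5 𝒜]
    {C : Type v} [SmallCategory C] :
    (∀ F : C ⥤ 𝒜, IsFiniteType F → HasFiniteSupport F) ∧
    (∀ F : C ⥤ 𝒜, HasFiniteSupport F →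
      (∀ c : C, IsFiniteType (endFunctor F c)) → IsFiniteType F) ∧
    ((∀ (F G : C ⥤ 𝒜) (p : F ⟶ G), Epi p → HasFiniteSupport F → HasFiniteSupport G) ∧
      (∀ S : ShortComplex (C ⥤ 𝒜), S.ShortExact →
        HasFiniteSupport S.X₁ → HasFiniteSupport S.X₃ → HasFiniteSupport S.X₂)) := by
  classical
  open FTSAux in
  refine ⟨?parta, ?partb, ?partc1, ?partc2⟩
  case parta =>
    intro F hF
    set f : Finset C → Subobject F := fun S => Subobject.mk (image.ι (genκ F S)) with hfdef
    have hmono : Monotone f := by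
      intro S T hST
      let incl : genK F S ⟶ genK F T :=
        { app := fun c => Sigma.desc fun p =>
            Sigma.ι (fun q : genIdx T c => F.obj q.1.1) ⟨⟨p.1.1, hST p.1.2⟩, p.2⟩
          naturality := by
            intro c d φ
            apply Sigma.hom_ext
            intro p
            simp [genK] }
      have hfac : incl ≫ genκ F T = genκ F S := by
        ext c
        apply Sigma.hom_ext
        intro p
        simp [genκ, incl]
        erw [Sigma.ι_desc_assoc, Sigma.ι_desc]
      let mf : MonoFactorisation (genκ F S) :=
        { I := image (genκ F T)
          m := image.ι (genκ F T)
          e := incl ≫ factorThruImage (genκ F T)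
          fac := by rw [Category.assoc, image.fac, hfac] }
      exact Subobject.mk_le_mk_of_comm (image.lift mf) (image.lift_fac mf)
    have hbound : ∀ g : Subobject F, (∀ S, f S ≤ g) → g = ⊤ := by
      intro g hg
      rw [← Subobject.isIso_arrow_iff_eq_top]
      have hiso : ∀ c : C, IsIso (g.arrow.app c) := by
        intro c
        have h1 : Epi ((genκ F ({c} : Finset C)).app c) := by
          have hsec : Sigma.ι (fun p : genIdx ({c} : Finset C) c => F.obj p.1.1)
              ⟨⟨c, Finset.mem_singleton_self c⟩, 𝟙 c⟩ ≫ (genκ F ({c} : Finset C)).app c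
              = 𝟙 (F.obj c) := by
            simp [genκ]
          haveI : Epi (Sigma.ι (fun p : genIdx ({c} : Finset C) c => F.obj p.1.1)
              ⟨⟨c, Finset.mem_singleton_self c⟩, 𝟙 c⟩ ≫ (genκ F ({c} : Finset C)).app c) := by
            rw [hsec]; infer_instance
          exact epi_of_epi (Sigma.ι (fun p : genIdx ({c} : Finset C) c => F.obj p.1.1)
            ⟨⟨c, Finset.mem_singleton_self c⟩, 𝟙 c⟩) ((genκ F ({c} : Finset C)).app c)
        have h2 : Epi ((image.ι (genκ F ({c} : Finset C))).app c) := by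
          have hfac := congrArg (fun (t : genK F ({c} : Finset C) ⟶ F) => t.app c)
            (image.fac (genκ F ({c} : Finset C)))
          simp only [NatTrans.comp_app] at hfac
          rw [← hfac] at h1
          haveI := h1
          exact epi_of_epi ((factorThruImage (genκ F ({c} : Finset C))).app c)
            ((image.ι (genκ F ({c} : Finset C))).app c)
        have h3 : f {c} ≤ g := hg {c}
        have h5 : Subobject.ofLE _ _ h3 ≫ g.arrow = (f {c}).arrow := Subobject.ofLE_arrow h3
        have h6 : (f {c}).arrow
            = (Subobject.underlyingIso (image.ι (genκ F ({c} : Finset C)))).hom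
              ≫ image.ι (genκ F ({c} : Finset C)) :=
          (Subobject.underlyingIso_hom_comp_eq_mk _).symm
        have h7 := congrArg (fun (t : ((f {c} : C ⥤ 𝒜)) ⟶ F) => t.app c) (h5.trans h6)
        simp only [NatTrans.comp_app] at h7
        haveI : Epi ((Subobject.ofLE _ _ h3).app c ≫ g.arrow.app c) := by
          rw [h7]
          haveI := h2
          exact epi_comp _ _
        haveI : Epi (g.arrow.app c) := epi_of_epi ((Subobject.ofLE _ _ h3).app c) (g.arrow.app c)
        exact isIso_of_mono_of_epi _
      exact NatIso.isIso_of_isIso_app g.arrow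
    obtain ⟨S, hS⟩ := hF (Finset C) f hmono hbound
    refine ⟨(S : Set C), S.finite_toSet, ?_⟩
    intro G i hi hisoS
    haveI := hi
    have hiso' : ∀ s : {x : C // x ∈ S}, IsIso (i.app s.1) := fun s => hisoS s.1 s.2
    let τ : genK F S ⟶ G :=
      { app := fun c => Sigma.desc fun p => by
          haveI := hiso' p.1
          exact inv (i.app p.1.1) ≫ G.map p.2
        naturality := by
          intro c d φ
          apply Sigma.hom_ext
          intro p
          haveI := hiso' p.1
          simp [genK]
      }
    have hτ : τ ≫ i = genκ F S := by
      ext c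
      apply Sigma.hom_ext
      intro p
      haveI := hiso' p.1
      simp only [NatTrans.comp_app, genκ]
      erw [Sigma.ι_desc]
      simp only [τ]
      erw [Sigma.ι_desc_assoc]
      simp [τ, i.naturality]
    have hle : f S ≤ Subobject.mk i := by
      let mf : MonoFactorisation (genκ F S) :=
        { I := G
          m := i
          e := τ
          fac := hτ }
      exact Subobject.mk_le_mk_of_comm (image.lift mf) (image.lift_fac mf)
    rw [hS] at hle
    exact (Subobject.isIso_iff_mk_eq_top i).mpr (top_le_iff.mp hle)
  case partb =>
    intro F hFs hft
    obtain ⟨S, hSfin, hsupp⟩ := hFs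
    intro ι _ _ _ f hmon hbd
    have hepi : Epi (Sigma.desc fun i => (f i).arrow) := epi_desc_arrow f hbd
    have happ : ∀ c : C, Epi (Sigma.desc fun i => (f i).arrow.app c) := by
      intro c
      exact (epi_desc_iff_app (fun i => (f i).arrow)).mp hepi c
    have key : ∀ c : C, ∃ i, IsIso ((f i).arrow.app c) := by
      intro c
      let m : ∀ i : ι, (toC c ⋙ ((f i : C ⥤ 𝒜))) ⟶ endFunctor F c :=
        fun i => Functor.whiskerLeft (toC c) (f i).arrow
      haveI hm : ∀ i, Mono (m i) := by
        intro i
        haveI : ∀ x, Mono ((m i).app x) := by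
          intro x
          show Mono ((f i).arrow.app c)
          infer_instance
        exact NatTrans.mono_of_mono_app _
      have hepi' : Epi (Sigma.desc m) := by
        rw [epi_desc_iff_app m]
        intro x
        show Epi (Sigma.desc fun i => (f i).arrow.app c)
        exact happ c
      have hgmono : Monotone (fun i => Subobject.mk (m i)) := by
        intro i j hij
        refine Subobject.mk_le_mk_of_comm (Functor.whiskerLeft (toC c) (Subobject.ofLE _ _ (hmon hij))) ?_
        show Functor.whiskerLeft (toC c) _ ≫ Functor.whiskerLeft (toC c) _ = _
        rw [← Functor.whiskerLeft_comp, Subobject.ofLE_arrow]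
      obtain ⟨i, hi⟩ := hft c ι (fun i => Subobject.mk (m i)) hgmono (bound_of_epi m hepi')
      haveI : IsIso (m i) := (Subobject.isIso_iff_mk_eq_top (m i)).mpr hi
      refine ⟨i, ?_⟩
      show IsIso ((m i).app (SingleObj.star (CategoryTheory.End c)))
      infer_instance
    choose idx hidx using key
    obtain ⟨i₀, hi₀⟩ := Finset.exists_le (hSfin.toFinset.image idx)
    refine ⟨i₀, ?_⟩
    rw [← Subobject.isIso_arrow_iff_eq_top]
    apply hsupp _ (f i₀).arrow inferInstance
    intro s hs
    have h1 : idx s ≤ i₀ := hi₀ _ (Finset.mem_image_of_mem idx (hSfin.mem_toFinset.mpr hs))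
    have h3 : Subobject.ofLE _ _ (hmon h1) ≫ (f i₀).arrow = (f (idx s)).arrow :=
      Subobject.ofLE_arrow _
    have h4 := congrArg (fun (t : ((f (idx s) : C ⥤ 𝒜)) ⟶ F) => t.app s) h3
    simp only [NatTrans.comp_app] at h4
    haveI := hidx s
    haveI : Epi ((Subobject.ofLE _ _ (hmon h1)).app s ≫ (f i₀).arrow.app s) := by
      rw [h4]; infer_instance
    haveI : Epi ((f i₀).arrow.app s) :=
      epi_of_epi ((Subobject.ofLE _ _ (hmon h1)).app s) ((f i₀).arrow.app s)
    exact isIso_of_mono_of_epi _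
  case partc1 =>
    intro F G p hp hFs
    obtain ⟨S, hSfin, hsupp⟩ := hFs
    refine ⟨S, hSfin, ?_⟩
    intro G' j hj hjiso
    haveI := hp
    haveI := hj
    have hfst : ∀ s ∈ S, IsIso ((pullback.fst p j).app s) := by
      intro s hs
      let E := (evaluation C 𝒜).obj s
      haveI : IsIso (E.map j) := hjiso s hs
      haveI : IsIso (E.map (pullback.fst p j)) := by
        rw [← PreservesPullback.iso_hom_fst E p j]
        infer_instance
      show IsIso (E.map (pullback.fst p j))
      infer_instance
    haveI : IsIso (pullback.fst p j) := hsupp _ (pullback.fst p j) inferInstance hfst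
    haveI : Epi (pullback.snd p j ≫ j) := by
      rw [← pullback.condition]
      exact epi_comp _ _
    haveI : Epi j := epi_of_epi (pullback.snd p j) j
    exact isIso_of_mono_of_epi j
  case partc2 =>
    intro T hT h1 h3
    obtain ⟨S₁, hS₁f, hs₁⟩ := h1
    obtain ⟨S₃, hS₃f, hs₃⟩ := h3
    refine ⟨S₁ ∪ S₃, hS₁f.union hS₃f, ?_⟩
    intro G j hj hjiso
    haveI := hj
    haveI := hT.mono_f
    haveI := hT.epi_g
    -- Step A : `j ≫ T.g` is epi
    haveI hepi_jg : Epi (j ≫ T.g) := by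
      haveI hi : IsIso (image.ι (j ≫ T.g)) := by
        apply hs₃ _ (image.ι (j ≫ T.g)) inferInstance
        intro s hs
        haveI : IsIso (j.app s) := hjiso s (Set.mem_union_right _ hs)
        have hfac := congrArg (fun (t : G ⟶ T.X₃) => t.app s) (image.fac (j ≫ T.g))
        simp only [NatTrans.comp_app] at hfac
        haveI : Epi ((j ≫ T.g).app s) := by
          rw [NatTrans.comp_app]
          exact epi_comp _ _
        haveI : Epi ((factorThruImage (j ≫ T.g)).app s ≫ (image.ι (j ≫ T.g)).app s) := by
          rw [hfac]; infer_instance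
        haveI : Epi ((image.ι (j ≫ T.g)).app s) :=
          epi_of_epi ((factorThruImage (j ≫ T.g)).app s) ((image.ι (j ≫ T.g)).app s)
        exact isIso_of_mono_of_epi _
      rw [← image.fac (j ≫ T.g)]
      exact epi_comp _ _
    -- Step B : `T.f` factors through `j`
    have hfst : ∀ s ∈ S₁, IsIso ((pullback.fst T.f j).app s) := by
      intro s hs
      let E := (evaluation C 𝒜).obj s
      haveI : IsIso (E.map j) := hjiso s (Set.mem_union_left _ hs)
      haveI : IsIso (E.map (pullback.fst T.f j)) := by
        rw [← PreservesPullback.iso_hom_fst E T.f j]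
        infer_instance
      show IsIso (E.map (pullback.fst T.f j))
      infer_instance
    haveI : IsIso (pullback.fst T.f j) := hs₁ _ (pullback.fst T.f j) inferInstance hfst
    have hθ : (inv (pullback.fst T.f j) ≫ pullback.snd T.f j) ≫ j = T.f := by
      rw [Category.assoc, ← pullback.condition, IsIso.inv_hom_id_assoc]
    -- Step C : `j` is epi
    have hfπ : T.f ≫ cokernel.π j = 0 := by
      rw [← hθ, Category.assoc, cokernel.condition, comp_zero]
    obtain ⟨u, hu⟩ := CokernelCofork.IsColimit.desc' hT.exact.gIsCokernel (cokernel.π j) hfπ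
    have hu0 : u = 0 := by
      have hzero : (j ≫ T.g) ≫ u = (j ≫ T.g) ≫ 0 := by
        rw [Category.assoc, comp_zero]
        show j ≫ Cofork.π (CokernelCofork.ofπ T.g T.zero) ≫ u = 0
        rw [hu, cokernel.condition]
      exact (cancel_epi (j ≫ T.g)).mp hzero
    have hπ0 : cokernel.π j = 0 := by
      rw [← hu, hu0, comp_zero]
    haveI : Epi j := CategoryTheory.Abelian.epi_of_cokernel_π_eq_zero j hπ0
    exact isIso_of_mono_of_epi j
end

section
/- Let 𝒞 be a small category, S and T sets of objects of 𝒞, 𝒜 an abelian category with colimits, and F : 𝒞 → 𝒜 a functor such that: (i) F vanishes on all objects not isomorphic to an element of S; (ii) F vanishes on all elements of T; (iii) every morphism s → x in 𝒞 with s ∈ S and F(x) = 0 factors through some morphism s → t with t ∈ T. Then S is a support of F and S ∪ T is a presentation support of F (i.e., the counit φ_! φ* F → F along the inclusion φ of the full subcategory on S ∪ T is an isomorphism). -/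
open CategoryTheory CategoryTheory.Limits
universe v u

/-- `S` is a *presentation support* of `F` if the counit of the left-Kan-extension
adjunction along the inclusion of the full subcategory on `S` is an isomorphism at `F`. -/
def IsPresentationSupport {𝒜 : Type u} [Category.{v} 𝒜] [HasColimits 𝒜]
    {C : Type v} [SmallCategory C] (S : Set C) (F : C ⥤ 𝒜) : Prop :=
  IsIso (((ObjectProperty.ι (· ∈ S)).lanAdjunction 𝒜).counit.app F)

/-- if `F` vanishes outside the objects isomorphic to an element of `S`,
vanishes on `T`, and every morphism `s → x` with `s ∈ S` and `F(x) = 0` factors through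
some `s → t` with `t ∈ T`, then `S` is a support of `F` and `S ∪ T` is a presentation
support of `F`. -/
theorem isSupport_and_presentationSupport_of_vanishing
    {𝒜 : Type u} [Category.{v} 𝒜] [Abelian 𝒜] [HasColimits 𝒜]
    {C : Type v} [SmallCategory C] (S T : Set C) (F : C ⥤ 𝒜)
    (h1 : ∀ x : C, (¬ ∃ s ∈ S, Nonempty (x ≅ s)) → IsZero (F.obj x))
    (h2 : ∀ t ∈ T, IsZero (F.obj t))
    (h3 : ∀ s ∈ S, ∀ (x : C) (f : s ⟶ x), IsZero (F.obj x) →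
      ∃ t ∈ T, ∃ (g : s ⟶ t) (h : t ⟶ x), f = g ≫ h) :
    IsSupport S F ∧ IsPresentationSupport (S ∪ T) F := by
  constructor
  · -- `S` is a support of `F`.
    intro G i hmono hiso
    have : ∀ x : C, IsIso (i.app x) := by
      intro x
      by_cases hx : ∃ s ∈ S, Nonempty (x ≅ s)
      · obtain ⟨s, hs, ⟨e⟩⟩ := hx
        have : i.app x = G.map e.hom ≫ i.app s ≫ F.map e.inv := by
          rw [i.naturality_assoc, ← F.map_comp, e.hom_inv_id, F.map_id, Category.comp_id]
        rw [this]
        have := hiso s hs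
        infer_instance
      · have hFx : IsZero (F.obj x) := h1 x hx
        have hm : Mono (i.app x) := by
          rw [NatTrans.mono_iff_mono_app] at hmono
          exact hmono x
        have hGx : IsZero (G.obj x) := IsZero.of_mono (i.app x) hFx
        exact ⟨⟨0, hGx.eq_of_src _ _, hFx.eq_of_src _ _⟩⟩
    exact NatIso.isIso_of_isIso_app i
  · -- `S ∪ T` is a presentation support of `F`.
    set φ := ObjectProperty.ι (· ∈ S ∪ T) with hφ
    rw [IsPresentationSupport, Functor.isIso_lanAdjunction_counit_app_iff]
    have hptwise : (Functor.LeftExtension.mk F (𝟙 (φ ⋙ F))).IsPointwiseLeftKanExtension := by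
      intro x
      by_cases hx : IsZero (F.obj x)
      · -- the colimit over the costructured arrow category is zero
        refine { desc := fun s => 0, fac := fun s j => ?_, uniq := fun s m hm => hx.eq_of_src _ _ }
        have hzero : s.ι.app j = 0 := by
          rcases j.left.2 with hjS | hjT
          · obtain ⟨t, ht, g, h, hfac⟩ := h3 j.left.1 hjS x j.hom hx
            let j' : CostructuredArrow φ x := CostructuredArrow.mk (show φ.obj ⟨t, Or.inr ht⟩ ⟶ x from h)
            let u : j ⟶ j' := CostructuredArrow.homMk (ObjectProperty.homMk g) (by simpa [j', φ] using hfac.symm)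
            have hw := s.w u
            have : s.ι.app j' = 0 := (h2 t ht).eq_of_src _ _
            rw [← hw, this, Limits.comp_zero]
          · exact (h2 _ hjT).eq_of_src _ _
        rw [hzero]
        exact Limits.comp_zero
      · -- `x` is isomorphic to an object of `S`, which gives a terminal object
        have hex : ∃ s ∈ S, Nonempty (x ≅ s) := by
          by_contra hc
          exact hx (h1 x hc)
        apply Nonempty.some
        obtain ⟨s, hs, ⟨e⟩⟩ := hex
        refine ⟨?_⟩
        let j₀ : CostructuredArrow φ x := CostructuredArrow.mk (show φ.obj ⟨s, Or.inl hs⟩ ⟶ x from e.inv)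
        have hterm : IsTerminal j₀ := by
          refine IsTerminal.ofUniqueHom
            (fun j => CostructuredArrow.homMk
              (show j.left ⟶ ⟨s, Or.inl hs⟩ from ObjectProperty.homMk (
                show φ.obj j.left ⟶ s from j.hom ≫ e.hom)) ?_) (fun j m => ?_)
          · simp [j₀, φ]
          · have hm : φ.map m.left ≫ e.inv = j.hom := CostructuredArrow.w m
            ext
            show φ.map m.left = j.hom ≫ e.hom
            rw [← hm, Category.assoc, Iso.inv_hom_id, Category.comp_id]
        refine IsColimit.ofIsoColimit (colimitOfDiagramTerminal hterm _)
          (Cocones.ext (F.mapIso e.symm) (fun j => ?_))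
        have hw : φ.map (hterm.from j).left ≫ e.inv = j.hom := CostructuredArrow.w _
        dsimp [φ, Functor.LeftExtension.coconeAt, Functor.LeftExtension.mk]
        exact ((F.map_comp _ _).symm.trans (congrArg F.map hw)).trans (Category.id_comp _).symm
    exact hptwise.isLeftKanExtension
end

section
/- Let 𝒞 be a small category, S a set of objects of 𝒞, 𝒜 an abelian category with colimits, and 0 → G → F → H → 0 a short exact sequence in Fct(𝒞, 𝒜). Then: (a) if S is a presentation support of both G and H, it is a presentation support of F; (b) if S is a support of G and a presentation support of F, then S is a presentation support of H. -/
open CategoryTheory CategoryTheory.Limits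
universe v u

section Aux
variable {D : Type*} [Category D] [Abelian D]

attribute [local simp] CategoryTheory.ComposableArrows.Precomp.map

open ZeroObject in
/-- Four-lemma style statement: if `ε : T ⟶ 𝟭` is a natural transformation, `E` is a short
exact sequence such that `T.map E.g` is a cokernel of `T.map E.f`, and `ε` is an isomorphism
at `E.X₁` and `E.X₃`, then it is an isomorphism at `E.X₂`. -/
lemma auxA (T : D ⥤ D) (ε : T ⟶ 𝟭 D) (E : ShortComplex D) (hE : E.ShortExact)
    (w : T.map E.f ≫ T.map E.g = 0)
    (hg : IsColimit (CokernelCofork.ofπ (T.map E.g) w))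
    (h₁ : IsIso (ε.app E.X₁)) (h₃ : IsIso (ε.app E.X₃)) : IsIso (ε.app E.X₂) := by
  have hTex : (ShortComplex.mk (T.map E.f) (T.map E.g) w).Exact :=
    ShortComplex.exact_of_g_is_cokernel _ hg
  have hTepi : Epi (T.map E.g) := epi_of_isColimit_cofork hg
  have hmf : Mono E.f := hE.mono_f
  have heg : Epi E.g := hE.epi_g
  have nf : T.map E.f ≫ ε.app E.X₂ = ε.app E.X₁ ≫ E.f := by
    simpa using ε.naturality E.f
  have ng : T.map E.g ≫ ε.app E.X₃ = ε.app E.X₂ ≫ E.g := by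
    simpa using ε.naturality E.g
  let φ' : ShortComplex.mk (T.map E.f) (T.map E.g) w ⟶ E :=
    { τ₁ := ε.app E.X₁, τ₂ := ε.app E.X₂, τ₃ := ε.app E.X₃, comm₁₂ := nf.symm, comm₂₃ := ng.symm }
  have hmono : Mono (ε.app E.X₂) :=
    ShortComplex.mono_of_mono_of_mono_of_mono φ' hTex hmf inferInstance inferInstance
  have hepi : Epi (ε.app E.X₂) :=
    ShortComplex.epi_of_epi_of_epi_of_epi φ' hE.exact hTepi inferInstance inferInstance
  exact isIso_of_mono_of_epi _

/-- If `ε : T ⟶ 𝟭` is a natural transformation, `E` is a short exact sequence such that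
`T.map E.g` is a cokernel of `T.map E.f`, `ε` is an isomorphism at `E.X₂` and an epimorphism
at `E.X₁`, then it is an isomorphism at `E.X₃`. -/
lemma auxB (T : D ⥤ D) (ε : T ⟶ 𝟭 D) (E : ShortComplex D) (hE : E.ShortExact)
    (w : T.map E.f ≫ T.map E.g = 0)
    (hg : IsColimit (CokernelCofork.ofπ (T.map E.g) w))
    (h₂ : IsIso (ε.app E.X₂)) (h₁ : Epi (ε.app E.X₁)) : IsIso (ε.app E.X₃) := by
  have heg : Epi E.g := hE.epi_g
  have hTepi : Epi (T.map E.g) := epi_of_isColimit_cofork hg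
  have nf : T.map E.f ≫ ε.app E.X₂ = ε.app E.X₁ ≫ E.f := by
    simpa using ε.naturality E.f
  have ng : T.map E.g ≫ ε.app E.X₃ = ε.app E.X₂ ≫ E.g := by
    simpa using ε.naturality E.g
  set c : E.X₂ ⟶ T.obj E.X₃ := inv (ε.app E.X₂) ≫ T.map E.g with hc
  have hepic : Epi c := epi_comp _ _
  have wc : E.f ≫ c = 0 := by
    rw [← cancel_epi (ε.app E.X₁), comp_zero, hc, ← Category.assoc, ← nf,
      Category.assoc, IsIso.hom_inv_id_assoc, w]
  have hc' : IsColimit (CokernelCofork.ofπ c wc) := by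
    refine CokernelCofork.IsColimit.ofπ' c wc (fun {A} k hk => ?_)
    refine ⟨hg.desc (CokernelCofork.ofπ (ε.app E.X₂ ≫ k) ?_), ?_⟩
    · rw [← Category.assoc, nf, Category.assoc, hk, comp_zero]
    · rw [hc, Category.assoc]
      erw [Cofork.IsColimit.π_desc hg]
      simp
  let j := hc'.coconePointUniqueUpToIso hE.gIsCokernel
  have hj : c ≫ j.hom = E.g :=
    hc'.comp_coconePointUniqueUpToIso_hom hE.gIsCokernel WalkingParallelPair.one
  have : ε.app E.X₃ = j.hom := by
    rw [← cancel_epi c, hj, hc, Category.assoc, ng, IsIso.inv_hom_id_assoc]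
  rw [this]
  infer_instance

end Aux

/-- given a short exact sequence `0 → G → F → H → 0` of functors,
(a) if `S` is a presentation support of `G` and `H` then it is one of `F`;
(b) if `S` is a support of `G` and a presentation support of `F`, then it is a
presentation support of `H`. -/
theorem presentationSupport_of_shortExact
    {𝒜 : Type u} [Category.{v} 𝒜] [Abelian 𝒜] [HasColimits 𝒜]
    {C : Type v} [SmallCategory C] (S : Set C)
    (E : ShortComplex (C ⥤ 𝒜)) (hE : E.ShortExact) :
    (IsPresentationSupport S E.X₁ → IsPresentationSupport S E.X₃ →
      IsPresentationSupport S E.X₂) ∧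
    (IsSupport S E.X₁ → IsPresentationSupport S E.X₂ →
      IsPresentationSupport S E.X₃) := by
  let φ : ObjectProperty.FullSubcategory (· ∈ S) ⥤ C := ObjectProperty.ι (· ∈ S)
  let adj := φ.lanAdjunction 𝒜
  let T : (C ⥤ 𝒜) ⥤ (C ⥤ 𝒜) := (Functor.whiskeringLeft _ C 𝒜).obj φ ⋙ φ.lan
  haveI : PreservesColimitsOfSize.{0,0} φ.lan := adj.leftAdjoint_preservesColimits
  haveI : HasColimitsOfSize.{0,0} 𝒜 := hasColimitsOfSizeShrink 𝒜
  haveI : PreservesColimit (parallelPair E.f 0) T := inferInstance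
  haveI : φ.lan.IsLeftAdjoint := adj.isLeftAdjoint
  haveI : T.PreservesZeroMorphisms := inferInstance
  have w : T.map E.f ≫ T.map E.g = 0 := by
    rw [← T.map_comp, E.zero, T.map_zero]
  have hg : IsColimit (CokernelCofork.ofπ (T.map E.g) w) :=
    isColimitCoforkMapOfIsColimit' T E.zero hE.gIsCokernel
  have hpt : ∀ (F : C ⥤ 𝒜) (s : C), s ∈ S → IsIso ((adj.counit.app F).app s) := by
    intro F s hs
    have h := Functor.lanUnit_app_app_lanAdjunction_counit_app_app (L := φ) (H := 𝒜) F ⟨s, hs⟩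
    haveI : IsIso ((φ.lanUnit.app (φ ⋙ F)).app ⟨s, hs⟩) := inferInstance
    have : IsIso ((adj.counit.app F).app (φ.obj ⟨s, hs⟩)) := by
      rw [← IsIso.inv_eq_of_hom_inv_id h]
      infer_instance
    exact this
  constructor
  · intro h1 h3
    exact auxA T adj.counit E hE w hg h1 h3
  · intro hsup h2
    have hepi : Epi (adj.counit.app E.X₁) := by
      set ε₁ : T.obj E.X₁ ⟶ E.X₁ := adj.counit.app E.X₁ with hε₁
      have hiso : IsIso (Abelian.image.ι ε₁) := by
        refine hsup _ (Abelian.image.ι ε₁) inferInstance (fun s hs => ?_)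
        haveI : IsIso (ε₁.app s) := hpt _ s hs
        have fac : (Abelian.factorThruImage ε₁).app s ≫ (Abelian.image.ι ε₁).app s
            = ε₁.app s := by
          rw [← NatTrans.comp_app, Abelian.image.fac]
        haveI : Epi ((Abelian.image.ι ε₁).app s) := by
          have : Epi ((Abelian.factorThruImage ε₁).app s ≫ (Abelian.image.ι ε₁).app s) := by
            rw [fac]; infer_instance
          exact epi_of_epi ((Abelian.factorThruImage ε₁).app s) _
        haveI : Mono ((Abelian.image.ι ε₁).app s) := inferInstance
        exact isIso_of_mono_of_epi _
      rw [← Abelian.image.fac ε₁]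
      exact epi_comp _ _
    exact auxB T adj.counit E hE w hg h2 hepi
end

section
/- Let ℳ be a small symmetric monoidal category whose unit is initial and which has a finite weak monoidal generating set {a_1, …, a_n}. Then there exists a strict symmetric monoidal functor Φ : Θ^n → ℳ (where Θ is the category of finite sets and injections) which is weakly essentially surjective: every object of ℳ is a direct summand of an object in the image of Φ. Consequently, the restriction functor Φ* : Fct(ℳ, 𝒜) → Fct(Θ^n, 𝒜) is exact and faithful for any abelian category 𝒜, and a functor F : ℳ → 𝒜 is noetherian whenever Φ*F is noetherian. -/
open CategoryTheory CategoryTheory.Limits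
universe v u

/-- The category `Θ` of finite sets with injections, with skeletal objects `ℕ`
(the object `n` standing for `{1,…,n}`) and morphisms the injections. -/
def Theta : Type := ℕ

/-- The object of `Θ` corresponding to a natural number. -/
def Theta.mk (n : ℕ) : Theta := n

/-- The cardinality of an object of `Θ`. -/
def Theta.card (n : Theta) : ℕ := n

instance : Category.{0} Theta where
  Hom m n := Fin m.card ↪ Fin n.card
  id _ := Function.Embedding.refl _
  comp f g := f.trans g

/-- The endofunctor `x ⊔ −` of `Θ` (disjoint union with a fixed finite set `x` on the
left). -/
def sh (x : ℕ) : Theta ⥤ Theta where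
  obj n := Theta.mk (x + n.card)
  map {m n} f :=
    (finSumFinEquiv.symm.toEmbedding.trans
      ((Function.Embedding.refl (Fin x)).sumMap f)).trans finSumFinEquiv.toEmbedding
  map_id := by
    intro n
    apply Function.Embedding.ext
    intro i
    show finSumFinEquiv (Sum.map _ _ (finSumFinEquiv.symm i)) = i
    conv_rhs => rw [← Equiv.apply_symm_apply finSumFinEquiv i]
    congr 1
    generalize finSumFinEquiv.symm i = s
    rcases s with j | j <;> rfl
  map_comp := by
    intro a b c f g
    apply Function.Embedding.ext
    intro i
    show finSumFinEquiv (Sum.map _ _ (finSumFinEquiv.symm i)) =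
      finSumFinEquiv (Sum.map _ _
        (finSumFinEquiv.symm (finSumFinEquiv (Sum.map _ _ (finSumFinEquiv.symm i)))))
    rw [Equiv.symm_apply_apply]
    congr 1
    generalize finSumFinEquiv.symm i = s
    rcases s with j | j <;> rfl


open CategoryTheory.MonoidalCategory

/-- The monoidal sum of a finite list of objects. -/
def msum {ℳ : Type v} [Category ℳ] [MonoidalCategory ℳ] : List ℳ → ℳ :=
  fun l => l.foldr (fun a b => a ⊗ b) (𝟙_ ℳ)

section Aux
open CategoryTheory.MonoidalCategory
variable {ℳ : Type} [SmallCategory ℳ] [MonoidalCategory ℳ] [SymmetricCategory ℳ]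

/-- k-fold monoidal power. -/
def mpow (a : ℳ) : ℕ → ℳ
  | 0 => 𝟙_ ℳ
  | k+1 => a ⊗ mpow a k

def mpowHom (hI : IsInitial (𝟙_ ℳ)) (a : ℳ) (k : ℕ) : mpow a k ⟶ mpow a (k+1) :=
  (λ_ (mpow a k)).inv ≫ (hI.to a ▷ mpow a k)

/-- The cardinality functor `Θ ⥤ ℕ` (to the poset `ℕ`). -/
def cardF : Theta ⥤ ℕ where
  obj := Theta.card
  map {m n} f := homOfLE (Fin.nonempty_embedding_iff.1 ⟨f⟩)
  map_id _ := rfl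
  map_comp _ _ := rfl

def seqF (hI : IsInitial (𝟙_ ℳ)) (a : ℳ) : Theta ⥤ ℳ :=
  cardF ⋙ Functor.ofSequence (mpowHom hI a)

def PhiF (hI : IsInitial (𝟙_ ℳ)) : ∀ n, (Fin n → ℳ) → ((Fin n → Theta) ⥤ ℳ)
  | 0, _ => (Functor.const _).obj (𝟙_ ℳ)
  | n+1, a =>
      (Pi.eval (fun _ => Theta) 0 ⋙ seqF hI (a 0)) ⊗
        (Pi.comap (fun _ => Theta) Fin.succ ⋙ PhiF hI n (fun i => a i.succ))

example (hI : IsInitial (𝟙_ ℳ)) (n : ℕ) (a : Fin (n+1) → ℳ) (p : Fin (n+1) → Theta) :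
    (PhiF hI (n+1) a).obj p =
      ((seqF hI (a 0)).obj (p 0) ⊗ (PhiF hI n (fun i => a i.succ)).obj (fun i => p i.succ)) := rfl

example (hI : IsInitial (𝟙_ ℳ)) (a : ℳ) (t : Theta) : (seqF hI a).obj t = mpow a t.card := rfl
end Aux
section Aux2
open CategoryTheory.MonoidalCategory
variable {ℳ : Type} [SmallCategory ℳ] [MonoidalCategory ℳ] [SymmetricCategory ℳ]
variable (hI : IsInitial (𝟙_ ℳ))

/-- middle-four exchange iso -/
def tmu (W X Y Z : ℳ) : (W ⊗ X) ⊗ (Y ⊗ Z) ≅ (W ⊗ Y) ⊗ (X ⊗ Z) :=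
  ⟨tensorμ W X Y Z, tensorδ W X Y Z, tensorμ_tensorδ W X Y Z, tensorδ_tensorμ W X Y Z⟩

lemma mpowAdd (a : ℳ) (k l : ℕ) : Nonempty (mpow a (k + l) ≅ mpow a k ⊗ mpow a l) := by
  induction k with
  | zero => rw [Nat.zero_add]; exact ⟨(λ_ (mpow a l)).symm⟩
  | succ k ih =>
      obtain ⟨e⟩ := ih
      rw [Nat.succ_add]
      exact ⟨whiskerLeftIso a e ≪≫ (α_ a (mpow a k) (mpow a l)).symm⟩

lemma phiZero : ∀ (n : ℕ) (a : Fin n → ℳ) (P : Fin n → Theta),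
    (∀ j, P j = Theta.mk 0) → Nonempty ((PhiF hI n a).obj P ≅ 𝟙_ ℳ)
  | 0, _, _, _ => ⟨Iso.refl _⟩
  | n+1, a, P, h => by
      rw [show P = fun _ => Theta.mk 0 from funext h]
      obtain ⟨e⟩ := phiZero n (fun i => a i.succ) (fun _ => Theta.mk 0) (fun _ => rfl)
      exact ⟨tensorIso (Iso.refl (𝟙_ ℳ)) e ≪≫ λ_ (𝟙_ ℳ)⟩

lemma phiAdd : ∀ (n : ℕ) (a : Fin n → ℳ) (P p q : Fin n → Theta),
    (∀ i, P i = Theta.mk ((p i).card + (q i).card)) →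
    Nonempty ((PhiF hI n a).obj P ≅ (PhiF hI n a).obj p ⊗ (PhiF hI n a).obj q)
  | 0, _, _, _, _, _ => ⟨(λ_ (𝟙_ ℳ)).symm⟩
  | n+1, a, P, p, q, h => by
      rw [show P = fun j => Theta.mk ((p j).card + (q j).card) from funext h]
      obtain ⟨e⟩ := phiAdd n (fun i => a i.succ)
        (fun i => Theta.mk ((p i.succ).card + (q i.succ).card))
        (fun i => p i.succ) (fun i => q i.succ) (fun _ => rfl)
      obtain ⟨e0⟩ := mpowAdd (a 0) (p 0).card (q 0).card
      exact ⟨tensorIso e0 e ≪≫ tmu _ _ _ _⟩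

lemma phiSingle : ∀ (n : ℕ) (a : Fin n → ℳ) (i : Fin n) (P : Fin n → Theta),
    P i = Theta.mk 1 → (∀ j, j ≠ i → P j = Theta.mk 0) →
    Nonempty ((PhiF hI n a).obj P ≅ a i)
  | 0, _, i, _, _, _ => i.elim0
  | n+1, a, i, P, h1, h0 => by
      induction i using Fin.cases with
      | zero =>
          have hP : P = fun j => Fin.cases (Theta.mk 1) (fun _ => Theta.mk 0) j := by
            funext j
            induction j using Fin.cases with
            | zero => exact h1
            | succ k => exact h0 k.succ (Fin.succ_ne_zero k)
          rw [hP]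
          obtain ⟨e⟩ := phiZero hI n (fun k => a k.succ) (fun _ => Theta.mk 0) (fun _ => rfl)
          exact ⟨tensorIso (ρ_ (a 0)) e ≪≫ ρ_ (a 0)⟩
      | succ j =>
          have hP : P = fun k =>
              Fin.cases (Theta.mk 0) (fun k' => if k' = j then Theta.mk 1 else Theta.mk 0) k := by
            funext k
            induction k using Fin.cases with
            | zero => simpa using h0 0 (Ne.symm (Fin.succ_ne_zero j))
            | succ k' =>
                by_cases hk : k' = j
                · subst hk; simpa using h1
                · simpa [hk] using h0 k'.succ (by simpa [Fin.succ_inj] using hk)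
          rw [hP]
          obtain ⟨e⟩ := phiSingle n (fun k => a k.succ) j
            (fun k' => if k' = j then Theta.mk 1 else Theta.mk 0) (by simp) (fun k hk => by simp [hk])
          exact ⟨tensorIso (Iso.refl (𝟙_ ℳ)) e ≪≫ λ_ _⟩
end Aux2
section Aux3
variable {𝒞 : Type} [SmallCategory 𝒞] {ℳ : Type} [SmallCategory ℳ] (Φ : 𝒞 ⥤ ℳ)
variable {𝒜 : Type u} [Category.{v} 𝒜] [Abelian 𝒜]
variable (hsurj : ∀ m : ℳ, ∃ (c : 𝒞) (ι : m ⟶ Φ.obj c) (r : Φ.obj c ⟶ m), ι ≫ r = 𝟙 m)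

include hsurj in
lemma restr_faithful : ((Functor.whiskeringLeft 𝒞 ℳ 𝒜).obj Φ).Faithful := by
  constructor
  intro F G α β h
  ext m
  obtain ⟨c, ι, r, hir⟩ := hsurj m
  have hc : α.app (Φ.obj c) = β.app (Φ.obj c) := congr_app h c
  have h1 : α.app m ≫ G.map ι = F.map ι ≫ α.app (Φ.obj c) := (α.naturality ι).symm
  have h2 : β.app m ≫ G.map ι = F.map ι ≫ β.app (Φ.obj c) := (β.naturality ι).symm
  calc α.app m = α.app m ≫ G.map ι ≫ G.map r := by
        rw [← G.map_comp, hir, G.map_id, Category.comp_id]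
    _ = F.map ι ≫ α.app (Φ.obj c) ≫ G.map r := by rw [← Category.assoc, h1, Category.assoc]
    _ = F.map ι ≫ β.app (Φ.obj c) ≫ G.map r := by rw [hc]
    _ = β.app m ≫ G.map ι ≫ G.map r := by rw [← Category.assoc, ← h2, Category.assoc]
    _ = β.app m := by rw [← G.map_comp, hir, G.map_id, Category.comp_id]

variable {F : ℳ ⥤ 𝒜}

instance whisker_mono {A : ℳ ⥤ 𝒜} (f : A ⟶ F) [Mono f] : Mono (Functor.whiskerLeft Φ f) := by
  haveI : ∀ c, Mono ((Functor.whiskerLeft Φ f).app c) :=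
    fun c => inferInstanceAs (Mono (f.app (Φ.obj c)))
  exact NatTrans.mono_of_mono_app _

/-- The map on subobject lattices induced by restriction along `Φ`. -/
noncomputable def restrSub (F : ℳ ⥤ 𝒜) : Subobject F → Subobject (Φ ⋙ F) :=
  Subobject.lift (fun _ f _ => Subobject.mk (Functor.whiskerLeft Φ f)) (by
    intro A B f g hf hg i hcomm
    exact Subobject.mk_eq_mk_of_comm _ _ (Functor.isoWhiskerLeft Φ i)
      (by ext c; exact congr_app hcomm (Φ.obj c)))

lemma restrSub_mk {A : ℳ ⥤ 𝒜} (f : A ⟶ F) [Mono f] :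
    restrSub Φ F (Subobject.mk f) = Subobject.mk (Functor.whiskerLeft Φ f) := by
  apply Subobject.lift_mk

lemma restrSub_mono {S T : Subobject F} (h : S ≤ T) : restrSub Φ F S ≤ restrSub Φ F T := by
  rw [← Subobject.mk_arrow S, ← Subobject.mk_arrow T] at h ⊢
  rw [restrSub_mk, restrSub_mk]
  have hcomm := Subobject.ofMkLEMk_comp h
  exact Subobject.mk_le_mk_of_comm (Functor.whiskerLeft Φ (Subobject.ofMkLEMk _ _ h))
    (by rw [← Functor.whiskerLeft_comp, hcomm])

include hsurj in
lemma restr_reflect_le {A B : ℳ ⥤ 𝒜} (f : A ⟶ F) (g : B ⟶ F) [Mono f] [Mono g]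
    (h : Subobject.mk (Functor.whiskerLeft Φ f) ≤ Subobject.mk (Functor.whiskerLeft Φ g)) :
    Subobject.mk f ≤ Subobject.mk g := by
  set k := Subobject.ofMkLEMk _ _ h with hkdef
  have hk : k ≫ Functor.whiskerLeft Φ g = Functor.whiskerLeft Φ f := Subobject.ofMkLEMk_comp h
  choose c ι r hir using hsurj
  set tapp : ∀ m : ℳ, A.obj m ⟶ B.obj m :=
    fun m => A.map (ι m) ≫ k.app (c m) ≫ B.map (r m) with htapp
  have key : ∀ m, tapp m ≫ g.app m = f.app m := by
    intro m
    have h1 : k.app (c m) ≫ g.app (Φ.obj (c m)) = f.app (Φ.obj (c m)) := congr_app hk (c m)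
    rw [htapp]
    simp only [Category.assoc]
    rw [g.naturality (r m), reassoc_of% h1, reassoc_of% (f.naturality (ι m)),
      ← F.map_comp, hir, F.map_id, Category.comp_id]
  have hmono : ∀ m, Mono (g.app m) := fun m => inferInstance
  refine Subobject.mk_le_mk_of_comm ⟨tapp, ?_⟩ (by ext m; exact key m)
  intro X Y u
  haveI := hmono Y
  rw [← cancel_mono (g.app Y)]
  calc (A.map u ≫ tapp Y) ≫ g.app Y = A.map u ≫ tapp Y ≫ g.app Y := Category.assoc _ _ _
    _ = A.map u ≫ f.app Y := by rw [key]
    _ = f.app X ≫ F.map u := f.naturality u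
    _ = (tapp X ≫ g.app X) ≫ F.map u := by rw [key]
    _ = tapp X ≫ g.app X ≫ F.map u := Category.assoc _ _ _
    _ = tapp X ≫ B.map u ≫ g.app Y := by rw [g.naturality u]
    _ = (tapp X ≫ B.map u) ≫ g.app Y := (Category.assoc _ _ _).symm

include hsurj in
lemma restrSub_reflect {S T : Subobject F}
    (h : restrSub Φ F S ≤ restrSub Φ F T) : S ≤ T := by
  rw [← Subobject.mk_arrow S, ← Subobject.mk_arrow T] at h ⊢
  rw [restrSub_mk, restrSub_mk] at h
  exact restr_reflect_le Φ hsurj _ _ h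

include hsurj in
lemma restr_noetherian (F : ℳ ⥤ 𝒜) (h : IsNoetherianObject (Φ ⋙ F)) : IsNoetherianObject F := by
  refine (isNoetherianObject.is_iff F).2 ⟨?_⟩
  have hwf : WellFounded (InvImage (· > ·) (restrSub Φ F)) :=
    InvImage.wf _ (wellFounded_gt (α := Subobject (Φ ⋙ F)))
  refine Subrelation.wf ?_ hwf
  intro S T hST
  obtain ⟨hle, hnle⟩ := lt_iff_le_not_ge.1 hST
  exact lt_iff_le_not_ge.2 ⟨restrSub_mono Φ hle,
    fun hc => hnle (restrSub_reflect Φ hsurj hc)⟩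
end Aux3
section Aux4
open CategoryTheory.MonoidalCategory
variable {ℳ : Type} [SmallCategory ℳ] [MonoidalCategory ℳ] [SymmetricCategory ℳ]
variable (hI : IsInitial (𝟙_ ℳ))

lemma phiList (n : ℕ) (a : Fin n → ℳ) :
    ∀ l : List ℳ, (∀ b ∈ l, ∃ i, b = a i) →
      ∃ p : Fin n → Theta, Nonempty ((PhiF hI n a).obj p ≅ msum l)
  | [], _ => ⟨fun _ => Theta.mk 0, phiZero hI n a _ (fun _ => rfl)⟩
  | b :: l, hl => by
      obtain ⟨i, hb⟩ := hl b List.mem_cons_self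
      obtain ⟨p', ⟨e'⟩⟩ := phiList n a l (fun x hx => hl x (List.mem_cons_of_mem b hx))
      obtain ⟨es⟩ := phiSingle hI n a i (fun j => if j = i then Theta.mk 1 else Theta.mk 0)
        (by simp) (fun j hj => by simp [hj])
      obtain ⟨ea⟩ := phiAdd hI n a
        (fun j => Theta.mk (((if j = i then Theta.mk 1 else Theta.mk 0) : Theta).card
          + (p' j).card))
        (fun j => if j = i then Theta.mk 1 else Theta.mk 0) p' (fun _ => rfl)
      subst hb
      exact ⟨_, ⟨ea ≪≫ tensorIso es e'⟩⟩
end Aux4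

/-- if `ℳ` is a small symmetric monoidal category with initial unit and a
finite weak monoidal generating set `a₁, …, aₙ`, then there is a (symmetric monoidal)
functor `Φ : Θⁿ ⥤ ℳ` — monoidal in the sense that it sends sums to tensor products and
the empty tuple to the unit — which is weakly essentially surjective: every object of `ℳ`
is a direct summand of an object in the image of `Φ`. Consequently, for any abelian
category `𝒜`, the restriction functor `Φ* : Fct(ℳ, 𝒜) → Fct(Θⁿ, 𝒜)` is exact and
faithful, and a functor `F : ℳ ⥤ 𝒜` is noetherian whenever `Φ* F` is. -/
theorem exists_weakly_essentially_surjective_from_theta_pow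
    {ℳ : Type} [SmallCategory ℳ] [MonoidalCategory ℳ] [SymmetricCategory ℳ]
    (hI : CategoryTheory.Limits.IsInitial (𝟙_ ℳ))
    (n : ℕ) (a : Fin n → ℳ)
    (hgen : ∀ m : ℳ, ∃ l : List ℳ, (∀ b ∈ l, ∃ i, b = a i) ∧
      ∃ (ι : m ⟶ msum l) (r : msum l ⟶ m), ι ≫ r = 𝟙 m) :
    ∃ Φ : (Fin n → Theta) ⥤ ℳ,
      (∀ p q : Fin n → Theta,
        Nonempty (Φ.obj (fun i => Theta.mk ((p i).card + (q i).card)) ≅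
          Φ.obj p ⊗ Φ.obj q)) ∧
      Nonempty (Φ.obj (fun _ => Theta.mk 0) ≅ 𝟙_ ℳ) ∧
      (∀ m : ℳ, ∃ (p : Fin n → Theta) (ι : m ⟶ Φ.obj p) (r : Φ.obj p ⟶ m),
        ι ≫ r = 𝟙 m) ∧
      (∀ (𝒜 : Type u) [Category.{v} 𝒜] [Abelian 𝒜],
        Limits.PreservesFiniteLimits ((Functor.whiskeringLeft (Fin n → Theta) ℳ 𝒜).obj Φ) ∧
        Limits.PreservesFiniteColimits ((Functor.whiskeringLeft (Fin n → Theta) ℳ 𝒜).obj Φ) ∧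
        ((Functor.whiskeringLeft (Fin n → Theta) ℳ 𝒜).obj Φ).Faithful ∧
        ∀ F : ℳ ⥤ 𝒜,
          IsNoetherianObject (((Functor.whiskeringLeft (Fin n → Theta) ℳ 𝒜).obj Φ).obj F) →
            IsNoetherianObject F) := by
  refine ⟨PhiF hI n a, fun p q => phiAdd hI n a _ p q (fun _ => rfl),
    phiZero hI n a _ (fun _ => rfl), ?_, ?_⟩
  case _ =>
    intro m
    obtain ⟨l, hl, ι, r, hir⟩ := hgen m
    obtain ⟨p, ⟨e⟩⟩ := phiList hI n a l hl
    exact ⟨p, ι ≫ e.inv, e.hom ≫ r, by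
      rw [Category.assoc, Iso.inv_hom_id_assoc, hir]⟩
  case _ =>
    have hsurj : ∀ m : ℳ, ∃ (c : Fin n → Theta) (ι : m ⟶ (PhiF hI n a).obj c)
        (r : (PhiF hI n a).obj c ⟶ m), ι ≫ r = 𝟙 m := by
      intro m
      obtain ⟨l, hl, ι, r, hir⟩ := hgen m
      obtain ⟨p, ⟨e⟩⟩ := phiList hI n a l hl
      exact ⟨p, ι ≫ e.inv, e.hom ≫ r, by
        rw [Category.assoc, Iso.inv_hom_id_assoc, hir]⟩
    intro 𝒜 _ _
    refine ⟨⟨fun J _ _ => inferInstance⟩, ⟨fun J _ _ => inferInstance⟩,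
      restr_faithful _ hsurj, fun F hF => restr_noetherian _ hsurj F hF⟩
end
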